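/- Let n ≥ 2, d ≥ 1 and let ρ : sVV_n → Mat_d(ℂ) be a calibrated representation with ρ(y_1) = 0. Suppose that for every 1 ≤ i ≤ n−1 and all indices ℓ ≠ m, the matrix entry (ρ(e_i))_{ℓ,m} is nonzero if and only if (ρ(s_i))_{ℓ,m} is nonzero. Then every diagonal entry of every ρ(s_i) equals +1 or −1, and for all 1 ≤ j ≤ n−1 and all 1 ≤ m ≤ d one has (ρ(y_{j+1}))_{m,m} = (ρ(y_j))_{m,m} + (ρ(s_j))_{m,m}; consequently (ρ(y_{j+1}))_{m,m} = Σ_{a=1}^{j} (ρ(s_a))_{m,m}, a sum of j terms each equal to ±1. -/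
import Mathlib


noncomputable section

namespace Periplectic

/-- Generators of the degenerate affine periplectic Brauer algebra on `n` strands:
`S i` for `1 ≤ i ≤ n-1`, `E i` for `1 ≤ i ≤ n-1`, `Y j` for `1 ≤ j ≤ n`. -/
inductive Gen (n : ℕ) : Type
  | S (i : ℕ) (h : 1 ≤ i ∧ i ≤ n - 1) : Gen n
  | E (i : ℕ) (h : 1 ≤ i ∧ i ≤ n - 1) : Gen n
  | Y (j : ℕ) (h : 1 ≤ j ∧ j ≤ n) : Gen n

/-- The free `ℂ`-algebra on the generators. -/
abbrev FA (n : ℕ) : Type := FreeAlgebra ℂ (Gen n)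

def fS (n i : ℕ) (h : 1 ≤ i ∧ i ≤ n - 1) : FA n := FreeAlgebra.ι ℂ (Gen.S i h)
def fE (n i : ℕ) (h : 1 ≤ i ∧ i ≤ n - 1) : FA n := FreeAlgebra.ι ℂ (Gen.E i h)
def fY (n j : ℕ) (h : 1 ≤ j ∧ j ≤ n) : FA n := FreeAlgebra.ι ℂ (Gen.Y j h)

/-- The defining relations of the degenerate affine periplectic Brauer algebra. -/
inductive Rel (n : ℕ) : FA n → FA n → Prop
  /- (VV1)  s_i² = 1 -/
  | s_sq (i : ℕ) (h : 1 ≤ i ∧ i ≤ n - 1) :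
      Rel n (fS n i h * fS n i h) 1
  /- (VV2)(i)  s_i e_j = e_j s_i for |i-j| > 1 -/
  | se_comm (i j : ℕ) (hi : 1 ≤ i ∧ i ≤ n - 1) (hj : 1 ≤ j ∧ j ≤ n - 1)
      (hij : i + 1 < j ∨ j + 1 < i) :
      Rel n (fS n i hi * fE n j hj) (fE n j hj * fS n i hi)
  /- (VV2)(ii)  e_i e_j = e_j e_i for |i-j| > 1 -/
  | ee_comm (i j : ℕ) (hi : 1 ≤ i ∧ i ≤ n - 1) (hj : 1 ≤ j ∧ j ≤ n - 1)
      (hij : i + 1 < j ∨ j + 1 < i) :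
      Rel n (fE n i hi * fE n j hj) (fE n j hj * fE n i hi)
  /- (VV2)(iii)  e_i y_j = y_j e_i for j ∉ {i, i+1} -/
  | ey_comm (i j : ℕ) (hi : 1 ≤ i ∧ i ≤ n - 1) (hj : 1 ≤ j ∧ j ≤ n)
      (hij : j ≠ i ∧ j ≠ i + 1) :
      Rel n (fE n i hi * fY n j hj) (fY n j hj * fE n i hi)
  /- (VV2)(iv)  y_i y_j = y_j y_i -/
  | yy_comm (i j : ℕ) (hi : 1 ≤ i ∧ i ≤ n) (hj : 1 ≤ j ∧ j ≤ n) :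
      Rel n (fY n i hi * fY n j hj) (fY n j hj * fY n i hi)
  /- (VV3)(i)  s_i s_j = s_j s_i for |i-j| > 1 -/
  | ss_comm (i j : ℕ) (hi : 1 ≤ i ∧ i ≤ n - 1) (hj : 1 ≤ j ∧ j ≤ n - 1)
      (hij : i + 1 < j ∨ j + 1 < i) :
      Rel n (fS n i hi * fS n j hj) (fS n j hj * fS n i hi)
  /- (VV3)(ii)  braid relation -/
  | braid (i : ℕ) (hi : 1 ≤ i ∧ i ≤ n - 1) (hi1 : 1 ≤ i + 1 ∧ i + 1 ≤ n - 1) :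
      Rel n (fS n i hi * fS n (i+1) hi1 * fS n i hi)
            (fS n (i+1) hi1 * fS n i hi * fS n (i+1) hi1)
  /- (VV3)(iii)  s_i y_j = y_j s_i for j ∉ {i, i+1} -/
  | sy_comm (i j : ℕ) (hi : 1 ≤ i ∧ i ≤ n - 1) (hj : 1 ≤ j ∧ j ≤ n)
      (hij : j ≠ i ∧ j ≠ i + 1) :
      Rel n (fS n i hi * fY n j hj) (fY n j hj * fS n i hi)
  /- (VV4)(i)  e_{i+1} e_i e_{i+1} = -e_{i+1} -/
  | eee_up (i : ℕ) (hi : 1 ≤ i ∧ i ≤ n - 1) (hi1 : 1 ≤ i + 1 ∧ i + 1 ≤ n - 1) :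
      Rel n (fE n (i+1) hi1 * fE n i hi * fE n (i+1) hi1) (-(fE n (i+1) hi1))
  /- (VV4)(ii)  e_i e_{i+1} e_i = -e_i -/
  | eee_down (i : ℕ) (hi : 1 ≤ i ∧ i ≤ n - 1) (hi1 : 1 ≤ i + 1 ∧ i + 1 ≤ n - 1) :
      Rel n (fE n i hi * fE n (i+1) hi1 * fE n i hi) (-(fE n i hi))
  /- (VV5)(i)  e_i s_i = e_i  and  s_i e_i = -e_i -/
  | es (i : ℕ) (hi : 1 ≤ i ∧ i ≤ n - 1) :
      Rel n (fE n i hi * fS n i hi) (fE n i hi)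
  | se (i : ℕ) (hi : 1 ≤ i ∧ i ≤ n - 1) :
      Rel n (fS n i hi * fE n i hi) (-(fE n i hi))
  /- (VV5)(ii)  s_i e_{i+1} e_i = s_{i+1} e_i -/
  | see (i : ℕ) (hi : 1 ≤ i ∧ i ≤ n - 1) (hi1 : 1 ≤ i + 1 ∧ i + 1 ≤ n - 1) :
      Rel n (fS n i hi * fE n (i+1) hi1 * fE n i hi) (fS n (i+1) hi1 * fE n i hi)
  /- (VV5)(iii)  s_{i+1} e_i e_{i+1} = -s_i e_{i+1} -/
  | see' (i : ℕ) (hi : 1 ≤ i ∧ i ≤ n - 1) (hi1 : 1 ≤ i + 1 ∧ i + 1 ≤ n - 1) :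
      Rel n (fS n (i+1) hi1 * fE n i hi * fE n (i+1) hi1) (-(fS n i hi * fE n (i+1) hi1))
  /- (VV5)(iv)  e_{i+1} e_i s_{i+1} = e_{i+1} s_i -/
  | ees (i : ℕ) (hi : 1 ≤ i ∧ i ≤ n - 1) (hi1 : 1 ≤ i + 1 ∧ i + 1 ≤ n - 1) :
      Rel n (fE n (i+1) hi1 * fE n i hi * fS n (i+1) hi1) (fE n (i+1) hi1 * fS n i hi)
  /- (VV5)(v)  e_i e_{i+1} s_i = -e_i s_{i+1} -/
  | ees' (i : ℕ) (hi : 1 ≤ i ∧ i ≤ n - 1) (hi1 : 1 ≤ i + 1 ∧ i + 1 ≤ n - 1) :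
      Rel n (fE n i hi * fE n (i+1) hi1 * fS n i hi) (-(fE n i hi * fS n (i+1) hi1))
  /- (VV6)  e_i² = 0 -/
  | e_sq (i : ℕ) (hi : 1 ≤ i ∧ i ≤ n - 1) :
      Rel n (fE n i hi * fE n i hi) 0
  /- (VV7)(i)  s_i y_i - y_{i+1} s_i = -e_i - 1 -/
  | sy_rel (i : ℕ) (hi : 1 ≤ i ∧ i ≤ n - 1) (hyi : 1 ≤ i ∧ i ≤ n)
      (hyi1 : 1 ≤ i + 1 ∧ i + 1 ≤ n) :
      Rel n (fS n i hi * fY n i hyi - fY n (i+1) hyi1 * fS n i hi) (-(fE n i hi) - 1)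
  /- (VV7)(ii)  y_i s_i - s_i y_{i+1} = e_i - 1 -/
  | ys_rel (i : ℕ) (hi : 1 ≤ i ∧ i ≤ n - 1) (hyi : 1 ≤ i ∧ i ≤ n)
      (hyi1 : 1 ≤ i + 1 ∧ i + 1 ≤ n) :
      Rel n (fY n i hyi * fS n i hi - fS n i hi * fY n (i+1) hyi1) (fE n i hi - 1)
  /- (VV8)(i)  e_i (y_i - y_{i+1}) = -e_i -/
  | e_ydiff (i : ℕ) (hi : 1 ≤ i ∧ i ≤ n - 1) (hyi : 1 ≤ i ∧ i ≤ n)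
      (hyi1 : 1 ≤ i + 1 ∧ i + 1 ≤ n) :
      Rel n (fE n i hi * (fY n i hyi - fY n (i+1) hyi1)) (-(fE n i hi))
  /- (VV8)(ii)  (y_i - y_{i+1}) e_i = e_i -/
  | ydiff_e (i : ℕ) (hi : 1 ≤ i ∧ i ≤ n - 1) (hyi : 1 ≤ i ∧ i ≤ n)
      (hyi1 : 1 ≤ i + 1 ∧ i + 1 ≤ n) :
      Rel n ((fY n i hyi - fY n (i+1) hyi1) * fE n i hi) (fE n i hi)

/-- The degenerate affine periplectic Brauer algebra `sVV n`. -/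
abbrev sVV (n : ℕ) : Type := RingQuot (Rel n)

/-- The generator `s_i` of `sVV n`. -/
def sgen (n i : ℕ) (h : 1 ≤ i ∧ i ≤ n - 1) : sVV n :=
  RingQuot.mkAlgHom ℂ (Rel n) (fS n i h)

/-- The generator `e_i` of `sVV n`. -/
def egen (n i : ℕ) (h : 1 ≤ i ∧ i ≤ n - 1) : sVV n :=
  RingQuot.mkAlgHom ℂ (Rel n) (fE n i h)

/-- The generator `y_j` of `sVV n`. -/
def ygen (n j : ℕ) (h : 1 ≤ j ∧ j ≤ n) : sVV n :=
  RingQuot.mkAlgHom ℂ (Rel n) (fY n j h)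

/-- Total version of `s_i` (equal to `sgen n i _` when `1 ≤ i ≤ n-1`, and `0` otherwise). -/
def ss (n i : ℕ) : sVV n := if h : 1 ≤ i ∧ i ≤ n - 1 then sgen n i h else 0

/-- Total version of `e_i`. -/
def ee (n i : ℕ) : sVV n := if h : 1 ≤ i ∧ i ≤ n - 1 then egen n i h else 0

/-- Total version of `y_j`. -/
def yy (n j : ℕ) : sVV n := if h : 1 ≤ j ∧ j ≤ n then ygen n j h else 0


/-- A calibrated representation of `sVV n` of dimension `d`: a unital `ℂ`-algebra homomorphism
to `d × d` matrices under which every `y_j` acts by a diagonal matrix. -/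
def IsCalibrated {n d : ℕ} (ρ : sVV n →ₐ[ℂ] Matrix (Fin d) (Fin d) ℂ) : Prop :=
  ∀ j : ℕ, 1 ≤ j → j ≤ n → (ρ (yy n j)).IsDiag

/-- Indecomposability of a matrix representation of `sVV n`: there is no direct sum
decomposition `ℂ^d = U ⊕ W` with `U, W` nonzero subspaces invariant under all `ρ a`. -/
def IsIndecomposableRep {n d : ℕ} (ρ : sVV n →ₐ[ℂ] Matrix (Fin d) (Fin d) ℂ) : Prop :=
  ¬ ∃ U W : Submodule ℂ (Fin d → ℂ), U ≠ ⊥ ∧ W ≠ ⊥ ∧ IsCompl U W ∧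
      (∀ a : sVV n, ∀ x ∈ U, (ρ a).mulVec x ∈ U) ∧
      (∀ a : sVV n, ∀ x ∈ W, (ρ a).mulVec x ∈ W)


lemma mul_diag_apply {d : ℕ} {A D : Matrix (Fin d) (Fin d) ℂ} (hD : D.IsDiag) (l m : Fin d) :
    (A * D) l m = A l m * D m m := by
  rw [Matrix.mul_apply]
  refine Finset.sum_eq_single m (fun k _ hk => ?_) (fun h => absurd (Finset.mem_univ m) h)
  rw [hD hk, mul_zero]

lemma diag_mul_apply {d : ℕ} {A D : Matrix (Fin d) (Fin d) ℂ} (hD : D.IsDiag) (l m : Fin d) :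
    (D * A) l m = D l l * A l m := by
  rw [Matrix.mul_apply]
  refine Finset.sum_eq_single l (fun k _ hk => ?_) (fun h => absurd (Finset.mem_univ l) h)
  rw [hD (Ne.symm hk), zero_mul]

lemma key_step {n d : ℕ} (hn : 2 ≤ n)
    (ρ : sVV n →ₐ[ℂ] Matrix (Fin d) (Fin d) ℂ) (hcal : IsCalibrated ρ)
    (hes : ∀ i : ℕ, 1 ≤ i → i ≤ n - 1 → ∀ l m : Fin d, l ≠ m →
      (ρ (ee n i) l m ≠ 0 ↔ ρ (ss n i) l m ≠ 0))
    (i : ℕ) (h1i : 1 ≤ i) (hin : i ≤ n - 1) :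
    (∀ m : Fin d, ρ (ss n i) m m = 1 ∨ ρ (ss n i) m m = -1) ∧
    (∀ m : Fin d, ρ (yy n (i+1)) m m = ρ (yy n i) m m + ρ (ss n i) m m) := by
  have hi : 1 ≤ i ∧ i ≤ n - 1 := ⟨h1i, hin⟩
  have hyi : 1 ≤ i ∧ i ≤ n := ⟨h1i, by omega⟩
  have hyi1 : 1 ≤ i + 1 ∧ i + 1 ≤ n := ⟨by omega, by omega⟩
  have hD1 : (ρ (yy n i)).IsDiag := hcal i h1i (by omega)
  have hD2 : (ρ (yy n (i+1))).IsDiag := hcal (i+1) (by omega) (by omega)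
  have hSg : ρ (ss n i) = ρ (sgen n i hi) := by rw [ss, dif_pos hi]
  have hEg : ρ (ee n i) = ρ (egen n i hi) := by rw [ee, dif_pos hi]
  have hY1g : ρ (yy n i) = ρ (ygen n i hyi) := by rw [yy, dif_pos hyi]
  have hY2g : ρ (yy n (i+1)) = ρ (ygen n (i+1) hyi1) := by rw [yy, dif_pos hyi1]
  set S := ρ (ss n i) with hS
  set E := ρ (ee n i) with hE
  set Y1 := ρ (yy n i) with hY1
  set Y2 := ρ (yy n (i+1)) with hY2
  have eq1 : S * Y1 - Y2 * S = -E - 1 := by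
    rw [hSg, hEg, hY1g, hY2g]
    have h := RingQuot.mkAlgHom_rel ℂ (Rel.sy_rel (n := n) i hi hyi hyi1)
    apply_fun ρ at h
    simpa [sgen, ygen, egen, map_sub, map_mul, map_neg, map_one] using h
  have eq2 : Y1 * S - S * Y2 = E - 1 := by
    rw [hSg, hEg, hY1g, hY2g]
    have h := RingQuot.mkAlgHom_rel ℂ (Rel.ys_rel (n := n) i hi hyi hyi1)
    apply_fun ρ at h
    simpa [sgen, ygen, egen, map_sub, map_mul, map_neg, map_one] using h
  have eq3 : E * Y1 - E * Y2 = -E := by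
    rw [hEg, hY1g, hY2g]
    have h := RingQuot.mkAlgHom_rel ℂ (Rel.e_ydiff (n := n) i hi hyi hyi1)
    apply_fun ρ at h
    simpa only [egen, ygen, map_mul, map_sub, map_neg, mul_sub] using h
  have eq4 : Y1 * E - Y2 * E = E := by
    rw [hEg, hY1g, hY2g]
    have h := RingQuot.mkAlgHom_rel ℂ (Rel.ydiff_e (n := n) i hi hyi hyi1)
    apply_fun ρ at h
    simpa only [egen, ygen, map_mul, map_sub, sub_mul] using h
  have eq5 : S * S = 1 := by
    rw [hSg]
    have h := RingQuot.mkAlgHom_rel ℂ (Rel.s_sq (n := n) i hi)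
    apply_fun ρ at h
    simpa [sgen, map_mul, map_one] using h
  -- diagonal entry computations
  have dA : ∀ m : Fin d, S m m * Y1 m m - Y2 m m * S m m = -(E m m) - 1 := by
    intro m
    have h := congrFun (congrFun eq1 m) m
    rw [Matrix.sub_apply, mul_diag_apply hD1, diag_mul_apply hD2] at h
    simpa [Matrix.sub_apply, Matrix.neg_apply, Matrix.one_apply] using h
  have dB : ∀ m : Fin d, Y1 m m * S m m - S m m * Y2 m m = E m m - 1 := by
    intro m
    have h := congrFun (congrFun eq2 m) m
    rw [Matrix.sub_apply, mul_diag_apply hD2, diag_mul_apply hD1] at h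
    simpa [Matrix.sub_apply, Matrix.one_apply] using h
  have hEdiag : ∀ m : Fin d, E m m = 0 := fun m => by
    linear_combination (dA m - dB m) / 2
  have hSdelta : ∀ m : Fin d, S m m * (Y1 m m - Y2 m m) = -1 := fun m => by
    linear_combination (dA m + dB m) / 2
  -- off-diagonal vanishing of S m k * S k m for k ≠ m
  have hoff : ∀ m k : Fin d, k ≠ m → S m k * S k m = 0 := by
    intro m k hk
    by_contra hne
    have hmk : S m k ≠ 0 := left_ne_zero_of_mul hne
    have hkm : S k m ≠ 0 := right_ne_zero_of_mul hne
    have hEmk : E m k ≠ 0 := (hes i h1i hin m k (Ne.symm hk)).mpr hmk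
    have hEkm : E k m ≠ 0 := (hes i h1i hin k m hk).mpr hkm
    -- from eq4 at (m,k):  (Y1 m m - Y2 m m) * E m k = E m k
    have h4 : Y1 m m * E m k - Y2 m m * E m k = E m k := by
      have h := congrFun (congrFun eq4 m) k
      rwa [Matrix.sub_apply, diag_mul_apply hD1, diag_mul_apply hD2] at h
    -- from eq3 at (k,m):  E k m * (Y1 m m - Y2 m m) = -E k m
    have h3 : E k m * Y1 m m - E k m * Y2 m m = -(E k m) := by
      have h := congrFun (congrFun eq3 k) m
      rwa [Matrix.sub_apply, mul_diag_apply hD1, mul_diag_apply hD2, Matrix.neg_apply] at h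
    have hp : Y1 m m - Y2 m m = 1 := by
      have := mul_right_cancel₀ hEmk (by linear_combination h4 : (Y1 m m - Y2 m m) * E m k = 1 * E m k)
      exact this
    have hq : Y1 m m - Y2 m m = -1 := by
      have := mul_left_cancel₀ hEkm (by linear_combination h3 : E k m * (Y1 m m - Y2 m m) = E k m * (-1))
      exact this
    rw [hp] at hq
    norm_num at hq
  have hSsq : ∀ m : Fin d, S m m * S m m = 1 := by
    intro m
    have h := congrFun (congrFun eq5 m) m
    rw [Matrix.mul_apply] at h
    rw [Finset.sum_eq_single m (fun k _ hk => hoff m k hk)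
      (fun h => absurd (Finset.mem_univ m) h)] at h
    simpa [Matrix.one_apply] using h
  constructor
  · intro m
    exact mul_self_eq_one_iff.mp (hSsq m)
  · intro m
    have h1 := hSdelta m
    have h2 := hSsq m
    linear_combination (Y1 m m - Y2 m m) * h2 - S m m * h1

/-- Let `ρ` be a calibrated representation of `sVV n` with `ρ(y_1) = 0`,
such that for every `i` and all `ℓ ≠ m` the off-diagonal entry `(ρ(e_i))_{ℓm}` is nonzero
iff `(ρ(s_i))_{ℓm}` is nonzero.  Then every diagonal entry of every `ρ(s_i)` is `±1`,
`(ρ(y_{j+1}))_{mm} = (ρ(y_j))_{mm} + (ρ(s_j))_{mm}`, and consequently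
`(ρ(y_{j+1}))_{mm} = Σ_{a=1}^{j} (ρ(s_a))_{mm}`, a sum of `j` terms each equal to `±1`. -/
theorem eigenvalue_closed_formula (n d : ℕ) (hn : 2 ≤ n) (hd : 1 ≤ d)
    (ρ : sVV n →ₐ[ℂ] Matrix (Fin d) (Fin d) ℂ) (hcal : IsCalibrated ρ)
    (h1 : ρ (yy n 1) = 0)
    (hes : ∀ i : ℕ, 1 ≤ i → i ≤ n - 1 → ∀ ℓ m : Fin d, ℓ ≠ m →
      (ρ (ee n i) ℓ m ≠ 0 ↔ ρ (ss n i) ℓ m ≠ 0)) :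
    (∀ i : ℕ, 1 ≤ i → i ≤ n - 1 → ∀ ℓ : Fin d,
      ρ (ss n i) ℓ ℓ = 1 ∨ ρ (ss n i) ℓ ℓ = -1) ∧
    (∀ j : ℕ, 1 ≤ j → j ≤ n - 1 → ∀ m : Fin d,
      ρ (yy n (j+1)) m m = ρ (yy n j) m m + ρ (ss n j) m m) ∧
    (∀ j : ℕ, 1 ≤ j → j ≤ n - 1 → ∀ m : Fin d,
      ρ (yy n (j+1)) m m = ∑ a ∈ Finset.Icc 1 j, ρ (ss n a) m m) := by
  have part1 : ∀ i : ℕ, 1 ≤ i → i ≤ n - 1 → ∀ l : Fin d,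
      ρ (ss n i) l l = 1 ∨ ρ (ss n i) l l = -1 :=
    fun i hi1 hi2 l => (key_step hn ρ hcal hes i hi1 hi2).1 l
  have part2 : ∀ j : ℕ, 1 ≤ j → j ≤ n - 1 → ∀ m : Fin d,
      ρ (yy n (j+1)) m m = ρ (yy n j) m m + ρ (ss n j) m m :=
    fun j hj1 hj2 m => (key_step hn ρ hcal hes j hj1 hj2).2 m
  refine ⟨part1, part2, ?_⟩
  intro j hj1
  induction j, hj1 using Nat.le_induction with
  | base =>
    intro hle m
    rw [part2 1 (le_refl 1) hle m]
    simp [h1, Finset.Icc_self]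
  | succ k hk ih =>
    intro hle m
    rw [part2 (k+1) (by omega) hle m, ih (by omega) m,
      Finset.sum_Icc_succ_top (by omega : 1 ≤ k + 1)]

end Periplectic
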